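/- If a stabilizer code family {𝒞_n} of parameters [[n, k, d]] has connectivity graphs that are s-separable with s(r) ≤ C·r^c for constants C > 0 and 0 < c < 1, then k·d^{2(1-c)} = O(n); i.e., there exists a constant C' with k ≤ C'·d^{2(c-1)}·n for all n. -/

import Mathlib

/-- A Pauli operator on `n` qubits, modulo phase, represented symplectically:
an X-part and a Z-part, each a vector in `F₂ⁿ`. -/
abbrev PauliVec (n : ℕ) := (Fin n → ZMod 2) × (Fin n → ZMod 2)

/-- The standard symplectic form on `F₂^{2n}`: two Pauli operators commute
iff the form vanishes. -/
def sympForm {n : ℕ} (u v : PauliVec n) : ZMod 2 :=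
  ∑ i : Fin n, (u.1 i * v.2 i + u.2 i * v.1 i)

/-- Support of a Pauli operator: the qubits on which it acts nontrivially. -/
def psupp {n : ℕ} (u : PauliVec n) : Finset (Fin n) :=
  Finset.univ.filter fun i => u.1 i ≠ 0 ∨ u.2 i ≠ 0

/-- Restriction of a Pauli operator to a subset `U` of qubits (identity elsewhere). -/
def prestrict {n : ℕ} (u : PauliVec n) (U : Finset (Fin n)) : PauliVec n :=
  (fun i => if i ∈ U then u.1 i else 0, fun i => if i ∈ U then u.2 i else 0)

namespace Stmt14

variable {n : ℕ}

/-- The symplectic form as a bilinear form. -/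
def sB (n : ℕ) : LinearMap.BilinForm (ZMod 2) (PauliVec n) :=
  LinearMap.mk₂ (ZMod 2) sympForm
    (fun u u' v => by
      simp only [sympForm, ← Finset.sum_add_distrib]
      exact Finset.sum_congr rfl fun i _ => by
        simp [Prod.fst_add, Prod.snd_add]; ring)
    (fun r u v => by
      simp only [sympForm, Finset.smul_sum]
      exact Finset.sum_congr rfl fun i _ => by
        simp [Prod.smul_fst, Prod.smul_snd, smul_eq_mul]; ring)
    (fun u v v' => by
      simp only [sympForm, ← Finset.sum_add_distrib]
      exact Finset.sum_congr rfl fun i _ => by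
        simp [Prod.fst_add, Prod.snd_add]; ring)
    (fun r u v => by
      simp only [sympForm, Finset.smul_sum]
      exact Finset.sum_congr rfl fun i _ => by
        simp [Prod.smul_fst, Prod.smul_snd, smul_eq_mul]; ring)

@[simp] lemma sB_apply (u v : PauliVec n) : sB n u v = sympForm u v := rfl

lemma sympForm_comm (u v : PauliVec n) : sympForm u v = sympForm v u :=
  Finset.sum_congr rfl fun i _ => by ring

lemma sB_symm : (sB n).IsSymm := ⟨fun u v => by
  simp [sympForm_comm u v]⟩

lemma sB_refl : (sB n).IsRefl := sB_symm.isRefl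

/-- basis test vectors -/
lemma sB_nondegenerate : (sB n).Nondegenerate := by
  have key : ∀ u : PauliVec n, (∀ v, sB n u v = 0) → u = 0 := by
    intro u hu
    ext i
    · have := hu (0, Pi.single i 1)
      simpa [sympForm, Pi.single_apply, Finset.sum_ite_eq'] using this
    · have := hu (Pi.single i 1, 0)
      simpa [sympForm, Pi.single_apply, Finset.sum_ite_eq'] using this
  exact ⟨key, fun u hu => key u fun v => by rw [sB_apply, sympForm_comm]; exact hu v⟩



/-- Operators supported inside `U`. -/
def pSet (U : Finset (Fin n)) : Submodule (ZMod 2) (PauliVec n) where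
  carrier := {v | ∀ i, i ∉ U → v.1 i = 0 ∧ v.2 i = 0}
  add_mem' := fun ha hb i hi => by
    simp [Prod.fst_add, Prod.snd_add, (ha i hi).1, (ha i hi).2, (hb i hi).1, (hb i hi).2]
  zero_mem' := fun i _ => ⟨rfl, rfl⟩
  smul_mem' := fun r v hv i hi => by
    simp [Prod.smul_fst, Prod.smul_snd, (hv i hi).1, (hv i hi).2]

lemma mem_pSet {U : Finset (Fin n)} {v : PauliVec n} :
    v ∈ pSet U ↔ ∀ i, i ∉ U → v.1 i = 0 ∧ v.2 i = 0 := Iff.rfl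

lemma mem_pSet_of_psupp {U : Finset (Fin n)} {v : PauliVec n} (h : psupp v ⊆ U) :
    v ∈ pSet U := by
  intro i hi
  by_contra hcon
  have : i ∈ psupp v := by
    simp only [psupp, Finset.mem_filter, Finset.mem_univ, true_and]
    tauto
  exact hi (h this)

lemma psupp_subset_of_mem_pSet {U : Finset (Fin n)} {v : PauliVec n} (h : v ∈ pSet U) :
    psupp v ⊆ U := by
  intro i hi
  simp only [psupp, Finset.mem_filter, Finset.mem_univ, true_and] at hi
  by_contra hc
  rcases h i hc with ⟨h1, h2⟩
  tauto

/-- Restriction to `U` as a linear map. -/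
def rmap (U : Finset (Fin n)) : PauliVec n →ₗ[ZMod 2] PauliVec n where
  toFun v := prestrict v U
  map_add' u v := by
    ext i <;> simp [prestrict, Prod.fst_add, Prod.snd_add] <;> split <;> simp
  map_smul' r v := by
    ext i <;> simp [prestrict, Prod.smul_fst, Prod.smul_snd] <;> split <;> simp

@[simp] lemma rmap_apply (U : Finset (Fin n)) (v : PauliVec n) : rmap U v = prestrict v U := rfl

lemma rmap_mem_pSet (U : Finset (Fin n)) (v : PauliVec n) : prestrict v U ∈ pSet U := by
  intro i hi
  simp [prestrict, hi]

lemma sympForm_prestrict_left (U : Finset (Fin n)) (u v : PauliVec n) :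
    sympForm (prestrict u U) v = sympForm u (prestrict v U) := by
  refine Finset.sum_congr rfl fun i _ => ?_
  simp only [prestrict]
  by_cases h : i ∈ U <;> simp [h]

lemma sympForm_prestrict_of_mem {U : Finset (Fin n)} {u : PauliVec n} (hu : u ∈ pSet U)
    (v : PauliVec n) : sympForm u (prestrict v U) = sympForm u v := by
  refine Finset.sum_congr rfl fun i _ => ?_
  simp only [prestrict]
  by_cases h : i ∈ U
  · simp [h]
  · rcases hu i h with ⟨h1, h2⟩
    simp [h, h1, h2]

lemma rmap_eq_zero_iff {U : Finset (Fin n)} {v : PauliVec n} :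
    rmap U v = 0 ↔ ∀ i ∈ U, v.1 i = 0 ∧ v.2 i = 0 := by
  constructor
  · intro h i hi
    have h1 := congrFun (congrArg Prod.fst h) i
    have h2 := congrFun (congrArg Prod.snd h) i
    simp [prestrict, hi] at h1 h2
    exact ⟨h1, h2⟩
  · intro h
    ext i
    · simp only [rmap_apply, prestrict, Prod.fst_zero, Pi.zero_apply]
      split
      · exact (h _ ‹_›).1
      · rfl
    · simp only [rmap_apply, prestrict, Prod.snd_zero, Pi.zero_apply]
      split
      · exact (h _ ‹_›).2
      · rfl


section Code

variable {ι : Type} [Fintype ι] (g : ι → PauliVec n)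

/-- stabilizer group -/
abbrev SS (g : ι → PauliVec n) : Submodule (ZMod 2) (PauliVec n) :=
  Submodule.span (ZMod 2) (Set.range g)

/-- centralizer -/
abbrev ZZ (g : ι → PauliVec n) : Submodule (ZMod 2) (PauliVec n) :=
  (sB n).orthogonal (SS g)

lemma mem_ZZ_iff {L : PauliVec n} : L ∈ ZZ g ↔ ∀ a, sympForm (g a) L = 0 := by
  rw [LinearMap.BilinForm.mem_orthogonal_iff]
  constructor
  · intro h a
    exact h (g a) (Submodule.subset_span ⟨a, rfl⟩)
  · intro h m hm
    have : SS g ≤ LinearMap.ker ((sB n).flip L) := by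
      rw [Submodule.span_le]
      rintro _ ⟨a, rfl⟩
      simpa [LinearMap.mem_ker] using h a
    exact this hm

lemma mem_ZZ_iff' {L : PauliVec n} : L ∈ ZZ g ↔ ∀ a, sympForm L (g a) = 0 := by
  rw [mem_ZZ_iff]
  exact forall_congr' fun a => by rw [sympForm_comm]

lemma sympForm_eq_zero_of_mem_SS {L m : PauliVec n} (hL : L ∈ ZZ g) (hm : m ∈ SS g) :
    sympForm m L = 0 := hL m hm

lemma SS_le_ZZ (hg : ∀ a b, sympForm (g a) (g b) = 0) : SS g ≤ ZZ g := by
  intro m hm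
  rw [mem_ZZ_iff]
  intro a
  have : SS g ≤ LinearMap.ker ((sB n) (g a)) := by
    rw [Submodule.span_le]
    rintro _ ⟨b, rfl⟩
    simpa [LinearMap.mem_ker] using hg a b
  simpa [LinearMap.mem_ker] using this hm

/-- A region is correctable if all centralizer elements supported on it are stabilizers. -/
def Corr (g : ι → PauliVec n) (U : Finset (Fin n)) : Prop :=
  ∀ v : PauliVec n, v ∈ ZZ g → v ∈ pSet U → v ∈ SS g

/-- Cleaning lemma: logical operators can be cleaned off a correctable region. -/
lemma cleaning (hg : ∀ a b, sympForm (g a) (g b) = 0) {U : Finset (Fin n)} (hU : Corr g U) :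
    ZZ g ≤ SS g ⊔ (ZZ g ⊓ pSet Uᶜ) := by
  intro L hL
  -- step 1 : prestrict L U ∈ (W^⊥)^⊥ = W where W = rmap U '' S
  set W : Submodule (ZMod 2) (PauliVec n) := Submodule.map (rmap U) (SS g) with hW
  have hLW : prestrict L U ∈ W := by
    rw [← LinearMap.BilinForm.orthogonal_orthogonal sB_nondegenerate sB_refl W]
    rw [LinearMap.BilinForm.mem_orthogonal_iff]
    intro y hy
    -- y is orthogonal to W; show prestrict y U ∈ ZZ g, supported in U, hence in S
    have hy' : ∀ w ∈ W, sympForm w y = 0 := by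
      intro w hw
      exact hy w hw
    have hyZ : prestrict y U ∈ ZZ g := by
      rw [LinearMap.BilinForm.mem_orthogonal_iff]
      intro m hm
      have : sympForm m (prestrict y U) = sympForm (prestrict m U) y := by
        rw [sympForm_prestrict_left]
      show sympForm m (prestrict y U) = 0
      rw [this]
      exact hy' (prestrict m U) ⟨m, hm, rfl⟩
    have hyS : prestrict y U ∈ SS g := hU _ hyZ (rmap_mem_pSet U y)
    show sympForm y (prestrict L U) = 0
    have e1 : sympForm y (prestrict L U) = sympForm (prestrict y U) L := by
      rw [sympForm_comm, sympForm_prestrict_left, sympForm_comm]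
    rw [e1]
    exact sympForm_eq_zero_of_mem_SS g hL hyS
  rcases hLW with ⟨s, hs, hsL⟩
  have htwo : ∀ a : ZMod 2, a + a = 0 := by decide
  -- L = s + (L + s)
  have hLs : L + s ∈ ZZ g ⊓ pSet Uᶜ := by
    constructor
    · exact Submodule.add_mem _ hL (SS_le_ZZ g hg hs)
    · intro i hi
      have hiU : i ∈ U := by simpa using hi
      have e1 : s.1 i = L.1 i := by
        have := congrFun (congrArg Prod.fst hsL) i
        simpa [prestrict, hiU] using this
      have e2 : s.2 i = L.2 i := by
        have := congrFun (congrArg Prod.snd hsL) i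
        simpa [prestrict, hiU] using this
      constructor
      · show L.1 i + s.1 i = 0
        rw [e1]; exact htwo _
      · show L.2 i + s.2 i = 0
        rw [e2]; exact htwo _
  have : L = s + (L + s) := by
    have : s + (L + s) = L + (s + s) := by abel
    rw [this]
    have : s + s = 0 := by
      ext i
      · exact htwo _
      · exact htwo _
    rw [this, add_zero]
  rw [this]
  exact Submodule.add_mem_sup hs hLs


lemma finrank_pauli : Module.finrank (ZMod 2) (PauliVec n) = 2 * n := by
  rw [Module.finrank_prod, Module.finrank_pi]
  simp [Fintype.card_fin, two_mul]

lemma finrank_pSet_le (U : Finset (Fin n)) :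
    Module.finrank (ZMod 2) (pSet (n := n) U) ≤ 2 * U.card := by
  let f : (pSet (n := n) U) →ₗ[ZMod 2] ((↥U → ZMod 2) × (↥U → ZMod 2)) :=
    { toFun := fun x => (fun i => x.val.1 i, fun i => x.val.2 i)
      map_add' := fun x y => rfl
      map_smul' := fun r x => rfl }
  have hinj : Function.Injective f := by
    intro x y hxy
    ext i
    · by_cases hi : i ∈ U
      · exact congrFun (congrArg Prod.fst hxy) ⟨i, hi⟩
      · rw [(x.2 i hi).1, (y.2 i hi).1]
    · by_cases hi : i ∈ U
      · exact congrFun (congrArg Prod.snd hxy) ⟨i, hi⟩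
      · rw [(x.2 i hi).2, (y.2 i hi).2]
  have := LinearMap.finrank_le_finrank_of_injective hinj
  rw [Module.finrank_prod, Module.finrank_pi, Fintype.card_coe] at this
  omega

lemma rank_bound (hg : ∀ a b, sympForm (g a) (g b) = 0)
    {Areg Breg Creg : Finset (Fin n)}
    (hcover : ∀ i : Fin n, i ∈ Areg ∨ i ∈ Breg ∨ i ∈ Creg)
    (hA : Corr g Areg) (hB : Corr g Breg) :
    n ≤ Module.finrank (ZMod 2) (SS g) + Creg.card := by
  classical
  set S := SS g with hS
  set Z := ZZ g with hZ
  set M := Z ⊓ pSet (n := n) Aregᶜ with hM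
  have hclean : Z ≤ S ⊔ M := cleaning g hg hA
  have hfv : Module.finrank (ZMod 2) (PauliVec n) = 2 * n := finrank_pauli
  have h1 : Module.finrank (ZMod 2) Z = 2 * n - Module.finrank (ZMod 2) S := by
    rw [← hfv]
    exact LinearMap.BilinForm.finrank_orthogonal sB_nondegenerate S
  have h1' : Module.finrank (ZMod 2) S ≤ 2 * n := hfv ▸ Submodule.finrank_le S
  have h2 : Module.finrank (ZMod 2) Z ≤ Module.finrank (ZMod 2) ↥(S ⊔ M) :=
    Submodule.finrank_mono hclean
  have h3 : Module.finrank (ZMod 2) ↥(S ⊔ M) + Module.finrank (ZMod 2) ↥(S ⊓ M)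
      = Module.finrank (ZMod 2) S + Module.finrank (ZMod 2) M :=
    Submodule.finrank_sup_add_finrank_inf_eq S M
  let f : M →ₗ[ZMod 2] PauliVec n := (rmap Creg).comp M.subtype
  have h4 : Module.finrank (ZMod 2) (LinearMap.range f)
      + Module.finrank (ZMod 2) (LinearMap.ker f) = Module.finrank (ZMod 2) M :=
    LinearMap.finrank_range_add_finrank_ker f
  have h5 : Module.finrank (ZMod 2) (LinearMap.range f) ≤ 2 * Creg.card := by
    have hle : LinearMap.range f ≤ pSet Creg := by
      rintro _ ⟨x, rfl⟩
      exact rmap_mem_pSet Creg x.val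
    exact le_trans (Submodule.finrank_mono hle) (finrank_pSet_le Creg)
  have h6 : Module.finrank (ZMod 2) (LinearMap.ker f)
      ≤ Module.finrank (ZMod 2) ↥(S ⊓ M) := by
    have hker : ∀ x : LinearMap.ker f, (x.val.val : PauliVec n) ∈ S ⊓ M := by
      rintro ⟨⟨x, hxM⟩, hx0⟩
      have hx0' : rmap Creg x = 0 := hx0
      have hxZ : x ∈ Z := hxM.1
      have hxB : x ∈ pSet Breg := by
        intro i hiB
        rcases hcover i with hi | hi | hi
        · exact hxM.2 i (by simpa using hi)
        · exact absurd hi hiB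
        · exact (rmap_eq_zero_iff.mp hx0') i hi
      refine ⟨hB x hxZ hxB, hxM⟩
    let φ : LinearMap.ker f →ₗ[ZMod 2] ↥(S ⊓ M) :=
      { toFun := fun x => ⟨x.val.val, hker x⟩
        map_add' := fun x y => rfl
        map_smul' := fun r x => rfl }
    have hφ : Function.Injective φ := by
      intro x y hxy
      have h0 : (x.val.val : PauliVec n) = y.val.val := congrArg (fun z : ↥(S ⊓ M) => z.val) hxy
      exact Subtype.ext (Subtype.ext h0)
    exact LinearMap.finrank_le_finrank_of_injective hφ
  omega


lemma mem_psupp {u : PauliVec n} {i : Fin n} :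
    i ∈ psupp u ↔ (u.1 i ≠ 0 ∨ u.2 i ≠ 0) := by
  simp [psupp]

lemma not_mem_psupp {u : PauliVec n} {i : Fin n} (h : i ∉ psupp u) :
    u.1 i = 0 ∧ u.2 i = 0 := by
  rw [mem_psupp] at h
  push_neg at h
  exact h

lemma corr_union (d : ℕ)
    (hdist : ∀ L : PauliVec n, (∀ a, sympForm L (g a) = 0) →
        L ∉ SS g → d ≤ (psupp L).card)
    (𝒜 : Finset (Finset (Fin n)))
    (hsmall : ∀ p ∈ 𝒜, p.card < d)
    (hdisj : ∀ p ∈ 𝒜, ∀ q ∈ 𝒜, p ≠ q → Disjoint p q)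
    (hnadj : ∀ p ∈ 𝒜, ∀ q ∈ 𝒜, p ≠ q → ∀ u ∈ p, ∀ v ∈ q, ∀ a : ι,
        ¬(u ∈ psupp (g a) ∧ v ∈ psupp (g a))) :
    Corr g (𝒜.sup id) := by
  classical
  intro v hvZ hvU
  have hpieceZ : ∀ p ∈ 𝒜, prestrict v p ∈ ZZ g := by
    intro p hp
    rw [mem_ZZ_iff']
    intro a
    by_cases hmeet : ∃ u ∈ p, u ∈ psupp (g a)
    · obtain ⟨u₀, hu₀p, hu₀s⟩ := hmeet
      have : sympForm (prestrict v p) (g a) = sympForm v (g a) := by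
        refine Finset.sum_congr rfl fun i _ => ?_
        simp only [prestrict]
        by_cases hip : i ∈ p
        · simp [hip]
        · simp only [if_neg hip]
          by_cases hiv : i ∈ psupp v
          · have hiU : i ∈ 𝒜.sup id := psupp_subset_of_mem_pSet hvU hiv
            rw [Finset.mem_sup] at hiU
            obtain ⟨q, hq, hiq⟩ := hiU
            simp only [id] at hiq
            have hqp : p ≠ q := fun h => hip (h ▸ hiq)
            have := hnadj p hp q hq hqp u₀ hu₀p i hiq a
            push_neg at this
            rcases not_mem_psupp (this hu₀s) with ⟨e1, e2⟩
            simp [e1, e2]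
          · rcases not_mem_psupp hiv with ⟨e1, e2⟩
            simp [e1, e2]
      rw [this]
      exact (mem_ZZ_iff' g).mp hvZ a
    · push_neg at hmeet
      apply Finset.sum_eq_zero
      intro i _
      simp only [prestrict]
      by_cases hip : i ∈ p
      · rcases not_mem_psupp (hmeet i hip) with ⟨e1, e2⟩
        simp [e1, e2]
      · simp [hip]
  have hpieceS : ∀ p ∈ 𝒜, prestrict v p ∈ SS g := by
    intro p hp
    by_contra hns
    have hd := hdist (prestrict v p) ((mem_ZZ_iff' g).mp (hpieceZ p hp)) hns
    have hsub : psupp (prestrict v p) ⊆ p := psupp_subset_of_mem_pSet (rmap_mem_pSet p v)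
    have := Finset.card_le_card hsub
    have := hsmall p hp
    omega
  have hdecomp : v = ∑ p ∈ 𝒜, prestrict v p := by
    ext i
    · rw [Prod.fst_sum, Finset.sum_apply]
      by_cases hiU : i ∈ 𝒜.sup id
      · rw [Finset.mem_sup] at hiU
        obtain ⟨p₀, hp₀, hip₀⟩ := hiU
        simp only [id] at hip₀
        rw [Finset.sum_eq_single p₀]
        · simp [prestrict, hip₀]
        · intro q hq hqne
          have : i ∉ q := by
            intro hiq
            exact Finset.disjoint_left.mp (hdisj q hq p₀ hp₀ hqne) hiq hip₀
          simp [prestrict, this]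
        · intro h
          exact absurd hp₀ h
      · have h0 : v.1 i = 0 := (hvU i hiU).1
        rw [h0]
        apply (Finset.sum_eq_zero _).symm
        intro p hp
        have : i ∉ p := fun hip => hiU (Finset.mem_sup.mpr ⟨p, hp, hip⟩)
        simp [prestrict, this]
    · rw [Prod.snd_sum, Finset.sum_apply]
      by_cases hiU : i ∈ 𝒜.sup id
      · rw [Finset.mem_sup] at hiU
        obtain ⟨p₀, hp₀, hip₀⟩ := hiU
        simp only [id] at hip₀
        rw [Finset.sum_eq_single p₀]
        · simp [prestrict, hip₀]
        · intro q hq hqne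
          have : i ∉ q := by
            intro hiq
            exact Finset.disjoint_left.mp (hdisj q hq p₀ hp₀ hqne) hiq hip₀
          simp [prestrict, this]
        · intro h
          exact absurd hp₀ h
      · have h0 : v.2 i = 0 := (hvU i hiU).2
        rw [h0]
        apply (Finset.sum_eq_zero _).symm
        intro p hp
        have : i ∉ p := fun hip => hiU (Finset.mem_sup.mpr ⟨p, hp, hip⟩)
        simp [prestrict, this]
  rw [hdecomp]
  exact Submodule.sum_mem _ fun p hp => hpieceS p hp

end Code

section Arith

lemma calc_step {C c : ℝ} (hC : 0 < C) (hc0 : 0 < c) (hc1 : c < 1)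
    {K1 K2 : ℝ} (hK2 : 0 < K2) (hKC : C + K2 ≤ K2 * (2:ℝ) ^ (1 - c)) (hK1 : K1 = K2 + C)
    {d : ℕ} (hd : 1 ≤ d) {r r1 r2 s : ℝ}
    (hr1 : 0 ≤ r1) (hr2 : 0 ≤ r2) (h1 : 2 * r1 ≤ r) (h2 : 2 * r2 ≤ r)
    (h12 : r1 + r2 ≤ r) (hdr : (d : ℝ) ≤ r) (hs : s ≤ C * r ^ c) (hs0 : 0 ≤ s) :
    s + max 0 (K1 * r1 * (d:ℝ) ^ (c - 1) - K2 * r1 ^ c)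
      + max 0 (K1 * r2 * (d:ℝ) ^ (c - 1) - K2 * r2 ^ c)
      ≤ max 0 (K1 * r * (d:ℝ) ^ (c - 1) - K2 * r ^ c) := by
  have hd0 : (0:ℝ) < d := by exact_mod_cast hd
  have hr0 : (0:ℝ) < r := lt_of_lt_of_le hd0 hdr
  set t := (d:ℝ) ^ (c - 1) with ht
  have ht0 : 0 < t := Real.rpow_pos_of_pos hd0 _
  set u := (r / 2) ^ (c - 1) with hu
  have hu0 : 0 < u := Real.rpow_pos_of_pos (by linarith) _
  have hK10 : 0 < K1 := by rw [hK1]; linarith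
  have hrc0 : 0 < r ^ c := Real.rpow_pos_of_pos hr0 _
  have hrpow : ∀ x : ℝ, 0 < x → x ^ c = x * x ^ (c - 1) := by
    intro x hx
    rw [show c = 1 + (c - 1) by ring, Real.rpow_add hx, Real.rpow_one]
    ring_nf
  have piece : ∀ x : ℝ, 0 ≤ x → 2 * x ≤ r →
      max 0 (K1 * x * t - K2 * x ^ c) ≤ x * max 0 (K1 * t - K2 * u) := by
    intro x hx0 hxr
    rcases eq_or_lt_of_le hx0 with h | h
    · rw [← h]
      simp [Real.zero_rpow (ne_of_gt hc0)]
    · apply max_le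
      · exact mul_nonneg hx0 (le_max_left _ _)
      · have hux : u ≤ x ^ (c - 1) :=
          Real.rpow_le_rpow_of_nonpos h (by linarith) (by linarith)
      -- x * u ≤ x ^ c
        have hxc : x * u ≤ x ^ c := by
          rw [hrpow x h]
          exact mul_le_mul_of_nonneg_left hux (le_of_lt h)
        calc K1 * x * t - K2 * x ^ c ≤ K1 * x * t - K2 * (x * u) := by nlinarith
          _ = x * (K1 * t - K2 * u) := by ring
          _ ≤ x * max 0 (K1 * t - K2 * u) :=
              mul_le_mul_of_nonneg_left (le_max_right _ _) (le_of_lt h)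
  have hrt : r ^ c ≤ r * t := by
    have htr : r ^ (c - 1) ≤ t :=
      Real.rpow_le_rpow_of_nonpos hd0 hdr (by linarith)
    rw [hrpow r hr0]
    exact mul_le_mul_of_nonneg_left htr (le_of_lt hr0)
  have p1 := piece r1 hr1 h1
  have p2 := piece r2 hr2 h2
  rcases le_or_gt (K1 * t - K2 * u) 0 with hcase | hcase
  · have hm : max 0 (K1 * t - K2 * u) = 0 := max_eq_left hcase
    rw [hm, mul_zero] at p1 p2
    have hgoal : C * r ^ c ≤ K1 * r * t - K2 * r ^ c := by
      have : (K2 + C) * r ^ c ≤ (K2 + C) * (r * t) :=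
        mul_le_mul_of_nonneg_left hrt (by linarith)
      nlinarith
    calc s + max 0 (K1 * r1 * t - K2 * r1 ^ c) + max 0 (K1 * r2 * t - K2 * r2 ^ c)
        ≤ C * r ^ c := by linarith
      _ ≤ K1 * r * t - K2 * r ^ c := hgoal
      _ ≤ max 0 (K1 * r * t - K2 * r ^ c) := le_max_right _ _
  · have hm : max 0 (K1 * t - K2 * u) = K1 * t - K2 * u := max_eq_right (le_of_lt hcase)
    rw [hm] at p1 p2
    have hru : r * u = (2:ℝ) ^ (1 - c) * r ^ c := by
      rw [hu, Real.div_rpow (le_of_lt hr0) (by norm_num), hrpow r hr0]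
      rw [show (1 : ℝ) - c = -(c-1) by ring, Real.rpow_neg (by norm_num)]
      field_simp
    have hgoal : C * r ^ c + r * (K1 * t - K2 * u) ≤ K1 * r * t - K2 * r ^ c := by
      have h2c : K2 * (r * u) = K2 * ((2:ℝ) ^ (1 - c)) * r ^ c := by rw [hru]; ring
      nlinarith
    have hsum : r1 * (K1 * t - K2 * u) + r2 * (K1 * t - K2 * u)
        ≤ r * (K1 * t - K2 * u) := by
      have : (r1 + r2) * (K1 * t - K2 * u) ≤ r * (K1 * t - K2 * u) :=
        mul_le_mul_of_nonneg_right h12 (le_of_lt hcase)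
      nlinarith
    calc s + max 0 (K1 * r1 * t - K2 * r1 ^ c) + max 0 (K1 * r2 * t - K2 * r2 ^ c)
        ≤ C * r ^ c + r * (K1 * t - K2 * u) := by linarith
      _ ≤ K1 * r * t - K2 * r ^ c := hgoal
      _ ≤ max 0 (K1 * r * t - K2 * r ^ c) := le_max_right _ _

end Arith

section Recur

variable {ι : Type}

lemma recur {n : ℕ} (g : ι → PauliVec n) {C c : ℝ} (hC : 0 < C) (hc0 : 0 < c) (hc1 : c < 1)
    {K1 K2 : ℝ} (hK2 : 0 < K2) (hKC : C + K2 ≤ K2 * (2:ℝ) ^ (1 - c)) (hK1 : K1 = K2 + C)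
    (d : ℕ) (hd : 1 ≤ d)
    (hsep : ∀ V' : Finset (Fin n), ∃ A Sp B : Finset (Fin n),
      A ∪ Sp ∪ B = V' ∧ Disjoint A Sp ∧ Disjoint A B ∧ Disjoint Sp B ∧
      2 * A.card ≤ V'.card ∧ 2 * B.card ≤ V'.card ∧
      (Sp.card : ℝ) ≤ C * (V'.card : ℝ) ^ c ∧
      (∀ u ∈ A, ∀ v ∈ B, ¬(u ≠ v ∧ ∃ a : ι, u ∈ psupp (g a) ∧ v ∈ psupp (g a)))) :
    ∀ V' : Finset (Fin n), ∃ (𝒜 : Finset (Finset (Fin n))) (R : Finset (Fin n)),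
      (∀ p ∈ 𝒜, p ⊆ V') ∧ (∀ p ∈ 𝒜, p.card < d) ∧
      (∀ p ∈ 𝒜, ∀ q ∈ 𝒜, p ≠ q → Disjoint p q) ∧
      (∀ p ∈ 𝒜, ∀ q ∈ 𝒜, p ≠ q → ∀ u ∈ p, ∀ v ∈ q, ∀ a : ι,
         ¬(u ∈ psupp (g a) ∧ v ∈ psupp (g a))) ∧
      R ⊆ V' ∧
      (∀ i ∈ V', i ∈ R ∨ ∃ p ∈ 𝒜, i ∈ p) ∧
      (R.card : ℝ) ≤ max 0 (K1 * V'.card * (d:ℝ) ^ (c - 1) - K2 * (V'.card : ℝ) ^ c) := by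
  intro V'
  induction V' using Finset.strongInduction with
  | _ V' ih =>
  by_cases hVd : V'.card < d
  · refine ⟨{V'}, ∅, ?_, ?_, ?_, ?_, ?_, ?_, ?_⟩
    · intro p hp; rw [Finset.mem_singleton] at hp; exact hp ▸ Finset.Subset.refl _
    · intro p hp; rw [Finset.mem_singleton] at hp; exact hp ▸ hVd
    · intro p hp q hq hne
      rw [Finset.mem_singleton] at hp hq
      exact absurd (hp.trans hq.symm) hne
    · intro p hp q hq hne
      rw [Finset.mem_singleton] at hp hq
      exact absurd (hp.trans hq.symm) hne
    · exact Finset.empty_subset _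
    · intro i hi
      exact Or.inr ⟨V', Finset.mem_singleton_self _, hi⟩
    · simpa using le_max_left (0:ℝ) _
  · push_neg at hVd
    obtain ⟨A, Sp, Bs, hun, dAS, dAB, dSB, h2A, h2B, hSp, hcross⟩ := hsep V'
    have hAsub : A ⊆ V' := by
      rw [← hun]
      exact (Finset.subset_union_left : A ⊆ A ∪ Sp).trans Finset.subset_union_left
    have hBsub : Bs ⊆ V' := by
      rw [← hun]; exact Finset.subset_union_right
    have hSpsub : Sp ⊆ V' := by
      rw [← hun]
      exact (Finset.subset_union_right : Sp ⊆ A ∪ Sp).trans Finset.subset_union_left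
    have hVpos : 1 ≤ V'.card := le_trans hd hVd
    have hAcard : A.card < V'.card := by omega
    have hBcard : Bs.card < V'.card := by omega
    have hAss : A ⊂ V' := Finset.ssubset_iff_subset_ne.mpr
      ⟨hAsub, fun h => by rw [h] at hAcard; omega⟩
    have hBss : Bs ⊂ V' := Finset.ssubset_iff_subset_ne.mpr
      ⟨hBsub, fun h => by rw [h] at hBcard; omega⟩
    obtain ⟨𝒜₁, R₁, hp1sub, hp1card, hp1dis, hp1adj, hR1sub, hcov1, hb1⟩ := ih A hAss
    obtain ⟨𝒜₂, R₂, hp2sub, hp2card, hp2dis, hp2adj, hR2sub, hcov2, hb2⟩ := ih Bs hBss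
    refine ⟨𝒜₁ ∪ 𝒜₂, Sp ∪ R₁ ∪ R₂, ?_, ?_, ?_, ?_, ?_, ?_, ?_⟩
    · intro p hp
      rcases Finset.mem_union.mp hp with h | h
      · exact (hp1sub p h).trans hAsub
      · exact (hp2sub p h).trans hBsub
    · intro p hp
      rcases Finset.mem_union.mp hp with h | h
      · exact hp1card p h
      · exact hp2card p h
    · intro p hp q hq hne
      rcases Finset.mem_union.mp hp with h | h <;> rcases Finset.mem_union.mp hq with h' | h'
      · exact hp1dis p h q h' hne
      · exact Finset.disjoint_of_subset_left (hp1sub p h)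
          (Finset.disjoint_of_subset_right (hp2sub q h') dAB)
      · exact (Finset.disjoint_of_subset_left (hp1sub q h')
          (Finset.disjoint_of_subset_right (hp2sub p h) dAB)).symm
      · exact hp2dis p h q h' hne
    · intro p hp q hq hne u hu v hv a
      rcases Finset.mem_union.mp hp with h | h <;> rcases Finset.mem_union.mp hq with h' | h'
      · exact hp1adj p h q h' hne u hu v hv a
      · intro ⟨hus, hvs⟩
        have huA : u ∈ A := hp1sub p h hu
        have hvB : v ∈ Bs := hp2sub q h' hv
        have huv : u ≠ v := fun he => Finset.disjoint_left.mp dAB huA (he ▸ hvB)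
        exact hcross u huA v hvB ⟨huv, a, hus, hvs⟩
      · intro ⟨hus, hvs⟩
        have hvA : v ∈ A := hp1sub q h' hv
        have huB : u ∈ Bs := hp2sub p h hu
        have hvu : v ≠ u := fun he => Finset.disjoint_left.mp dAB hvA (he ▸ huB)
        exact hcross v hvA u huB ⟨hvu, a, hvs, hus⟩
      · exact hp2adj p h q h' hne u hu v hv a
    · intro i hi
      rcases Finset.mem_union.mp hi with h | h
      · rcases Finset.mem_union.mp h with h' | h'
        · exact hSpsub h'
        · exact (hR1sub.trans hAsub) h'
      · exact (hR2sub.trans hBsub) h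
    · intro i hi
      rw [← hun] at hi
      rcases Finset.mem_union.mp hi with h | h
      · rcases Finset.mem_union.mp h with h' | h'
        · rcases hcov1 i h' with h'' | ⟨p, hp, hip⟩
          · exact Or.inl (Finset.mem_union_left _ (Finset.mem_union_right _ h''))
          · exact Or.inr ⟨p, Finset.mem_union_left _ hp, hip⟩
        · exact Or.inl (Finset.mem_union_left _ (Finset.mem_union_left _ h'))
      · rcases hcov2 i h with h'' | ⟨p, hp, hip⟩
        · exact Or.inl (Finset.mem_union_right _ h'')
        · exact Or.inr ⟨p, Finset.mem_union_right _ hp, hip⟩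
    · have hcard : ((Sp ∪ R₁ ∪ R₂).card : ℝ) ≤ (Sp.card : ℝ) + R₁.card + R₂.card := by
        have h1 := Finset.card_union_le (Sp ∪ R₁) R₂
        have h2 := Finset.card_union_le Sp R₁
        have h3 : (Sp ∪ R₁ ∪ R₂).card ≤ Sp.card + R₁.card + R₂.card := by omega
        push_cast
        exact_mod_cast h3
      have hAB : A.card + Bs.card ≤ V'.card := by
        have := Finset.card_union_of_disjoint dAB
        have hsub : A ∪ Bs ⊆ V' := Finset.union_subset hAsub hBsub
        have := Finset.card_le_card hsub
        omega
      have step : (Sp.card : ℝ)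
          + max 0 (K1 * (A.card : ℝ) * (d:ℝ) ^ (c - 1) - K2 * (A.card : ℝ) ^ c)
          + max 0 (K1 * (Bs.card : ℝ) * (d:ℝ) ^ (c - 1) - K2 * (Bs.card : ℝ) ^ c)
          ≤ max 0 (K1 * (V'.card : ℝ) * (d:ℝ) ^ (c - 1) - K2 * (V'.card : ℝ) ^ c) :=
        calc_step hC hc0 hc1 hK2 hKC hK1 hd
          (by positivity) (by positivity)
          (by exact_mod_cast h2A) (by exact_mod_cast h2B)
          (by exact_mod_cast hAB) (by exact_mod_cast hVd) hSp (by positivity)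
      calc ((Sp ∪ R₁ ∪ R₂).card : ℝ) ≤ (Sp.card : ℝ) + R₁.card + R₂.card := hcard
        _ ≤ (Sp.card : ℝ) + max 0 (K1 * A.card * (d:ℝ) ^ (c-1) - K2 * (A.card:ℝ) ^ c)
            + max 0 (K1 * Bs.card * (d:ℝ) ^ (c-1) - K2 * (Bs.card:ℝ) ^ c) := by
              linarith [hb1, hb2]
        _ ≤ _ := step

end Recur


end Stmt14

/-- Dimension bound: for any stabilizer code family whose connectivity graphs are
`s`-separable with `s(r) ≤ C·r^c`, `0 < c < 1`, the code dimension
`k = n - dim S` satisfies `k ≤ C'·d^{2(c-1)}·n` for a constant `C'`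
depending only on `C` and `c`. -/
theorem stmt14_dimension_bound (C c : ℝ) (hC : 0 < C) (hc0 : 0 < c) (hc1 : c < 1) :
    ∃ C' : ℝ, 0 < C' ∧
      ∀ (n : ℕ) (ι : Type) [Fintype ι] (g : ι → PauliVec n),
        (∀ a b : ι, sympForm (g a) (g b) = 0) →
        ∀ d : ℕ, 1 ≤ d →
          -- d lower-bounds the weight of every nontrivial logical operator
          (∀ L : PauliVec n, (∀ a : ι, sympForm L (g a) = 0) →
            L ∉ Submodule.span (ZMod 2) (Set.range g) → d ≤ (psupp L).card) →
          -- every induced subgraph of the connectivity graph has a balanced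
          -- separator of size at most C·r^c
          (∀ V' : Finset (Fin n), ∃ A Sp B : Finset (Fin n),
            A ∪ Sp ∪ B = V' ∧ Disjoint A Sp ∧ Disjoint A B ∧ Disjoint Sp B ∧
            2 * A.card ≤ V'.card ∧ 2 * B.card ≤ V'.card ∧
            (Sp.card : ℝ) ≤ C * (V'.card : ℝ) ^ c ∧
            (∀ u ∈ A, ∀ v ∈ B,
              ¬(u ≠ v ∧ ∃ a : ι, u ∈ psupp (g a) ∧ v ∈ psupp (g a)))) →
          ((n - Module.finrank (ZMod 2)
              (Submodule.span (ZMod 2) (Set.range g)) : ℕ) : ℝ) ≤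
            C' * (d : ℝ) ^ (2 * (c - 1)) * (n : ℝ) := by
  classical
  have h2c : (1:ℝ) < (2:ℝ) ^ (1 - c) :=
    (Real.one_lt_rpow_iff_of_pos (by norm_num)).mpr (Or.inl ⟨by norm_num, by linarith⟩)
  set K2 : ℝ := C / ((2:ℝ) ^ (1 - c) - 1) with hK2def
  have hK2 : 0 < K2 := div_pos hC (by linarith)
  have hne : ((2:ℝ) ^ (1 - c) - 1) ≠ 0 := ne_of_gt (by linarith)
  have hmul : K2 * ((2:ℝ) ^ (1 - c) - 1) = C := by
    rw [hK2def]; exact div_mul_cancel₀ C hne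
  have hKC : C + K2 ≤ K2 * (2:ℝ) ^ (1 - c) := by nlinarith
  set K1 : ℝ := K2 + C with hK1def
  have hK10 : 0 < K1 := by rw [hK1def]; linarith
  refine ⟨K1 ^ 2, by positivity, ?_⟩
  intro n ι _ g hg d hd hdist hsep
  obtain ⟨𝒜₁, R₁, h1sub, h1card, h1dis, h1adj, hR1sub, hcov1, hb1⟩ :=
    Stmt14.recur g hC hc0 hc1 hK2 hKC hK1def d hd hsep Finset.univ
  obtain ⟨𝒜₂, R₂, h2sub, h2card, h2dis, h2adj, hR2sub, hcov2, hb2⟩ :=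
    Stmt14.recur g hC hc0 hc1 hK2 hKC hK1def d hd hsep R₁
  have hcorrA := Stmt14.corr_union g d hdist 𝒜₁ h1card h1dis h1adj
  have hcorrB := Stmt14.corr_union g d hdist 𝒜₂ h2card h2dis h2adj
  have hcover : ∀ i : Fin n, i ∈ 𝒜₁.sup id ∨ i ∈ 𝒜₂.sup id ∨ i ∈ R₂ := by
    intro i
    rcases hcov1 i (Finset.mem_univ i) with h | ⟨p, hp, hip⟩
    · rcases hcov2 i h with h' | ⟨p, hp, hip⟩
      · exact Or.inr (Or.inr h')
      · exact Or.inr (Or.inl (Finset.mem_sup.mpr ⟨p, hp, hip⟩))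
    · exact Or.inl (Finset.mem_sup.mpr ⟨p, hp, hip⟩)
  have hrank : n ≤ Module.finrank (ZMod 2)
      (Submodule.span (ZMod 2) (Set.range g)) + R₂.card :=
    Stmt14.rank_bound g hg hcover hcorrA hcorrB
  have hk : (n - Module.finrank (ZMod 2)
      (Submodule.span (ZMod 2) (Set.range g)) : ℕ) ≤ R₂.card := by omega
  -- numeric chain
  have hd0 : (0:ℝ) < (d:ℝ) := by exact_mod_cast hd
  have ht0 : (0:ℝ) < (d:ℝ) ^ (c - 1) := Real.rpow_pos_of_pos hd0 _
  set t : ℝ := (d:ℝ) ^ (c - 1) with htdef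
  have hmax_le : ∀ x : ℝ, 0 ≤ x →
      max 0 (K1 * x * t - K2 * x ^ c) ≤ K1 * x * t := by
    intro x hx
    apply max_le
    · positivity
    · have : 0 ≤ K2 * x ^ c := by positivity
      linarith
  have huniv : ((Finset.univ : Finset (Fin n)).card : ℝ) = (n : ℝ) := by
    simp
  have hb1' : (R₁.card : ℝ) ≤ K1 * n * t := by
    have := le_trans hb1 (hmax_le _ (by positivity))
    rwa [huniv] at this
  have hb2' : (R₂.card : ℝ) ≤ K1 * R₁.card * t :=
    le_trans hb2 (hmax_le _ (by positivity))
  have hchain : (R₂.card : ℝ) ≤ K1 ^ 2 * n * (t * t) := by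
    have h1 : K1 * (R₁.card : ℝ) * t ≤ K1 * (K1 * n * t) * t := by
      have := mul_le_mul_of_nonneg_left hb1' (le_of_lt hK10)
      exact mul_le_mul_of_nonneg_right this (le_of_lt ht0)
    calc (R₂.card : ℝ) ≤ K1 * R₁.card * t := hb2'
      _ ≤ K1 * (K1 * n * t) * t := h1
      _ = K1 ^ 2 * n * (t * t) := by ring
  have htt : t * t = (d:ℝ) ^ (2 * (c - 1)) := by
    rw [htdef, ← Real.rpow_add hd0]
    ring_nf
  calc ((n - Module.finrank (ZMod 2)
        (Submodule.span (ZMod 2) (Set.range g)) : ℕ) : ℝ)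
      ≤ (R₂.card : ℝ) := by exact_mod_cast hk
    _ ≤ K1 ^ 2 * n * (t * t) := hchain
    _ = K1 ^ 2 * (d:ℝ) ^ (2 * (c - 1)) * n := by rw [htt]; ring
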